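/- Let p and q be probability mass functions on a countable type Y and let ε, δ ≥ 0. (i) If with probability at least 1−δ over a ∼ p one has |log(p(a)/q(a))| ≤ ε, then p(S) ≤ e^ε·q(S) + δ for every S ⊆ Y. (ii) If in addition with probability at least 1−δ over a ∼ q one has |log(p(a)/q(a))| ≤ ε, then p and q are (ε,δ)-indistinguishable. -/

import Mathlib

open scoped ENNReal

/-- Two PMFs are `(ε,δ)`-indistinguishable if each assigns to every set at most
`e^ε` times the mass the other assigns, plus `δ`. -/
def Indist {Y : Type*} (p q : PMF Y) (ε δ : ℝ) : Prop :=
  ∀ S : Set Y,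
    p.toOuterMeasure S ≤ ENNReal.ofReal (Real.exp ε) * q.toOuterMeasure S + ENNReal.ofReal δ ∧
    q.toOuterMeasure S ≤ ENNReal.ofReal (Real.exp ε) * p.toOuterMeasure S + ENNReal.ofReal δ

/-- The pointwise log-ratio privacy loss `log (p a / q a)`, taken in the extended
reals (the ratio `p a / q a` is computed in `ℝ≥0∞`, so `q a = 0` gives `+∞`). -/
noncomputable def ptLoss {Y : Type*} (p q : PMF Y) (a : Y) : EReal :=
  ENNReal.log (p a / q a)

private lemma compl_small {Y : Type*} (p : PMF Y) (δ : ℝ) (hδ : 0 ≤ δ) (G : Set Y)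
    (hG : ENNReal.ofReal (1 - δ) ≤ p.toOuterMeasure G) :
    p.toOuterMeasure Gᶜ ≤ ENNReal.ofReal δ := by
  have hsum : p.toOuterMeasure G + p.toOuterMeasure Gᶜ = 1 := by
    rw [PMF.toOuterMeasure_apply, PMF.toOuterMeasure_apply, ← ENNReal.tsum_add]
    rw [← p.tsum_coe]
    congr 1
    funext a
    exact congrFun (G.indicator_self_add_compl p) a
  rcases le_or_gt 1 δ with h1 | h1
  · calc p.toOuterMeasure Gᶜ ≤ 1 := by
          rw [← hsum]; exact le_add_self
      _ ≤ ENNReal.ofReal δ := by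
          rw [← ENNReal.ofReal_one]; exact ENNReal.ofReal_le_ofReal h1
  · have hGne : p.toOuterMeasure G ≠ ⊤ := by
      intro h
      rw [h] at hsum
      simp at hsum
    have h2 : p.toOuterMeasure Gᶜ = 1 - p.toOuterMeasure G := by
      rw [← hsum]; rw [ENNReal.add_sub_cancel_left hGne]
    rw [h2]
    calc (1 : ℝ≥0∞) - p.toOuterMeasure G ≤ 1 - ENNReal.ofReal (1 - δ) :=
          tsub_le_tsub_left hG 1
      _ = ENNReal.ofReal δ := by
          rw [← ENNReal.ofReal_one, ← ENNReal.ofReal_sub _ (by linarith)]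
          norm_num

private lemma one_sided {Y : Type*} (p q : PMF Y) (ε δ : ℝ) (hδ : 0 ≤ δ) (G : Set Y)
    (hpt : ∀ a ∈ G, p a ≤ ENNReal.ofReal (Real.exp ε) * q a)
    (hG : ENNReal.ofReal (1 - δ) ≤ p.toOuterMeasure G) (S : Set Y) :
    p.toOuterMeasure S ≤ ENNReal.ofReal (Real.exp ε) * q.toOuterMeasure S + ENNReal.ofReal δ := by
  have hcomp := compl_small p δ hδ G hG
  have key : p.toOuterMeasure S ≤
      ENNReal.ofReal (Real.exp ε) * q.toOuterMeasure S + p.toOuterMeasure Gᶜ := by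
    rw [PMF.toOuterMeasure_apply, PMF.toOuterMeasure_apply, PMF.toOuterMeasure_apply,
      ← ENNReal.tsum_mul_left, ← ENNReal.tsum_add]
    refine ENNReal.tsum_le_tsum fun a => ?_
    by_cases haS : a ∈ S
    · by_cases haG : a ∈ G
      · calc S.indicator (⇑p) a = p a := Set.indicator_of_mem haS _
          _ ≤ ENNReal.ofReal (Real.exp ε) * q a := hpt a haG
          _ = ENNReal.ofReal (Real.exp ε) * S.indicator (⇑q) a := by
              rw [Set.indicator_of_mem haS]
          _ ≤ _ := le_add_right le_rfl
      · calc S.indicator (⇑p) a ≤ p a := Set.indicator_le_self _ _ _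
          _ = Gᶜ.indicator (⇑p) a := (Set.indicator_of_mem (Set.mem_compl haG) _).symm
          _ ≤ _ := le_add_left le_rfl
    · simp [Set.indicator_of_notMem haS]
  exact key.trans (add_le_add le_rfl hcomp)

private lemma mem_G_bound {Y : Type*} (p q : PMF Y) (ε : ℝ) (a : Y)
    (h : ENNReal.log (p a / q a) ≤ (ε : EReal)) :
    p a ≤ ENNReal.ofReal (Real.exp ε) * q a := by
  have hlog : ENNReal.log (ENNReal.ofReal (Real.exp ε)) = (ε : EReal) := by
    rw [ENNReal.log_ofReal_of_pos (Real.exp_pos ε), Real.log_exp]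
  rw [← hlog, ENNReal.log_le_log_iff] at h
  by_cases hp : p a = 0
  · simp [hp]
  by_cases hq : q a = 0
  · exfalso
    rw [hq, ENNReal.div_zero hp] at h
    exact (h.trans_lt ENNReal.ofReal_lt_top).ne rfl
  · exact (ENNReal.div_le_iff hq (PMF.apply_ne_top q a)).mp h

/-- (i) If with probability at least `1 - δ` over `a ∼ p` we have
`|log (p a / q a)| ≤ ε`, then `p S ≤ e^ε · q S + δ` for every `S`.
(ii) If moreover the same holds with probability at least `1 - δ` over `a ∼ q`,
then `p` and `q` are `(ε,δ)`-indistinguishable. -/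
theorem pointwise_indistinguishable_implies_indistinguishable
    {Y : Type*} [Countable Y] (p q : PMF Y) (ε δ : ℝ) (hε : 0 ≤ ε) (hδ : 0 ≤ δ) :
    (ENNReal.ofReal (1 - δ) ≤
        p.toOuterMeasure {a | max (ptLoss p q a) (-(ptLoss p q a)) ≤ (ε : EReal)} →
      ∀ S : Set Y,
        p.toOuterMeasure S ≤ ENNReal.ofReal (Real.exp ε) * q.toOuterMeasure S +
          ENNReal.ofReal δ) ∧
    (ENNReal.ofReal (1 - δ) ≤
        p.toOuterMeasure {a | max (ptLoss p q a) (-(ptLoss p q a)) ≤ (ε : EReal)} →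
      ENNReal.ofReal (1 - δ) ≤
        q.toOuterMeasure {a | max (ptLoss p q a) (-(ptLoss p q a)) ≤ (ε : EReal)} →
      Indist p q ε δ) := by
  set G : Set Y := {a | max (ptLoss p q a) (-(ptLoss p q a)) ≤ (ε : EReal)} with hGdef
  have hpq : ∀ a ∈ G, p a ≤ ENNReal.ofReal (Real.exp ε) * q a := by
    intro a ha
    exact mem_G_bound p q ε a ((le_max_left _ _).trans ha)
  have hqp : ∀ a ∈ G, q a ≤ ENNReal.ofReal (Real.exp ε) * p a := by
    intro a ha
    have h2 : -(ptLoss p q a) ≤ (ε : EReal) := (le_max_right _ _).trans ha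
    have h3 : ENNReal.log (q a / p a) ≤ (ε : EReal) := by
      rw [← ENNReal.inv_div (Or.inl (PMF.apply_ne_top q a)) ?_, ENNReal.log_inv]
      · exact h2
      · by_cases hq : q a = 0
        · right
          intro hp
          have : ptLoss p q a = ⊥ := by
            simp [ptLoss, hp, ENNReal.log_zero]
          rw [this] at h2
          simp at h2
        · exact Or.inl hq
    exact mem_G_bound q p ε a h3
  constructor
  · intro hp
    exact one_sided p q ε δ hδ G hpq hp
  · intro hp hq
    intro S
    exact ⟨one_sided p q ε δ hδ G hpq hp S, one_sided q p ε δ hδ G hqp hq S⟩
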